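/- For integers k ≥ 1 and 0 ≤ j ≤ k with j ≤ 2(k−1) appropriately (i.e., so all factorials are of nonnegative integers), Σ_{i=0}^{⌊j/2⌋} (−1)^i · (k−i−1)!·2^{j−2i} / ((j−2i)!·i!) = (k−⌊j/2⌋−1)!/j! · 2^{⌈j/2⌉} · ∏_{i=0}^{⌊j/2⌋−1} (2k − 2⌈j/2⌉ − 1 − 2i). -/

import Mathlib

open Finset


noncomputable def aT (d n r i : ℕ) : ℝ :=
  (-1 : ℝ) ^ (n - i) * (d + i).factorial * 2 ^ (r + 2 * i) /
    ((r + 2 * i).factorial * (n - i).factorial)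

noncomputable def Lsum (d n r : ℕ) : ℝ := ∑ i ∈ Finset.range (n + 1), aT d n r i

noncomputable def Rprod (d n r : ℕ) : ℝ :=
  (d.factorial : ℝ) / (2 * n + r).factorial * 2 ^ (n + r) *
    ∏ i ∈ Finset.range n, (2 * (d : ℝ) + 1 - 2 * (r : ℝ) - 2 * (i : ℝ))

lemma aT1 (d n i : ℕ) : (2 * (i : ℝ) + 2) * aT d (n+1) 0 (i+1) = 2 * aT (d+1) n 1 i := by
  unfold aT
  rw [show n + 1 - (i + 1) = n - i from by omega,
      show d + (i + 1) = (d + 1) + i from by omega,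
      show 0 + 2 * (i + 1) = (1 + 2 * i) + 1 from by omega,
      pow_succ, Nat.factorial_succ]
  have h1 : ((1 + 2 * i).factorial : ℝ) ≠ 0 := Nat.cast_ne_zero.mpr (Nat.factorial_ne_zero _)
  have h2 : ((n - i).factorial : ℝ) ≠ 0 := Nat.cast_ne_zero.mpr (Nat.factorial_ne_zero _)
  push_cast
  field_simp
  ring

lemma aT3 (d n i : ℕ) : (2 * (i : ℝ) + 1) * aT d n 1 i = 2 * aT d n 0 i := by
  unfold aT
  rw [show 1 + 2 * i = (0 + 2 * i) + 1 from by omega, pow_succ, Nat.factorial_succ]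
  have h1 : ((0 + 2 * i).factorial : ℝ) ≠ 0 := Nat.cast_ne_zero.mpr (Nat.factorial_ne_zero _)
  have h2 : ((n - i).factorial : ℝ) ≠ 0 := Nat.cast_ne_zero.mpr (Nat.factorial_ne_zero _)
  push_cast
  field_simp
  ring

lemma aTv (d n r i : ℕ) (h : i ≤ n) :
    (2 * (n : ℝ) + 2 - 2 * (i : ℝ)) * aT d (n+1) r i = -2 * aT d n r i := by
  unfold aT
  obtain ⟨m, hm⟩ : ∃ m, n - i = m := ⟨n - i, rfl⟩
  have hni : n = m + i := by omega
  rw [show n + 1 - i = m + 1 from by omega, hm, pow_succ, Nat.factorial_succ,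
      show (2 * (n : ℝ) + 2 - 2 * (i : ℝ)) = 2 * ((m : ℝ) + 1) from by
        subst hni; push_cast; ring]
  have h1 : (((r + 2 * i).factorial) : ℝ) ≠ 0 := Nat.cast_ne_zero.mpr (Nat.factorial_ne_zero _)
  have h2 : ((m).factorial : ℝ) ≠ 0 := Nat.cast_ne_zero.mpr (Nat.factorial_ne_zero _)
  have h3 : ((m : ℕ) : ℝ) + 1 ≠ 0 := by positivity
  field_simp
  push_cast
  ring

lemma Lrec_even (d n : ℕ) :
    (2 * (n : ℝ) + 2) * Lsum d (n+1) 0 = 2 * Lsum (d+1) n 1 - 2 * Lsum d n 0 := by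
  have expand : (2 * (n : ℝ) + 2) * Lsum d (n+1) 0
      = (∑ i ∈ Finset.range (n+2), (2 * (i : ℝ)) * aT d (n+1) 0 i)
      + ∑ i ∈ Finset.range (n+2), (2 * (n : ℝ) + 2 - 2 * (i : ℝ)) * aT d (n+1) 0 i := by
    rw [Lsum, Finset.mul_sum, ← Finset.sum_add_distrib]
    exact Finset.sum_congr rfl fun i _ => by ring
  rw [expand]
  have e1 : (∑ i ∈ Finset.range (n+2), (2 * (i : ℝ)) * aT d (n+1) 0 i)
      = 2 * Lsum (d+1) n 1 := by
    rw [Finset.sum_range_succ']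
    simp only [Nat.cast_zero, mul_zero, zero_mul, add_zero]
    rw [Lsum, Finset.mul_sum]
    refine Finset.sum_congr rfl fun i hi => ?_
    have := aT1 d n i
    push_cast
    linarith
  have e2 : (∑ i ∈ Finset.range (n+2), (2 * (n : ℝ) + 2 - 2 * (i : ℝ)) * aT d (n+1) 0 i)
      = (-2) * Lsum d n 0 := by
    rw [Finset.sum_range_succ,
        show (2 * (n : ℝ) + 2 - 2 * ((n + 1 : ℕ) : ℝ)) = 0 from by push_cast; ring,
        zero_mul, add_zero, Lsum, Finset.mul_sum]
    exact Finset.sum_congr rfl fun i hi => aTv d n 0 i (Nat.lt_succ_iff.mp (Finset.mem_range.mp hi))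
  rw [e1, e2]; ring

lemma Lrec_odd (d n : ℕ) :
    (2 * (n : ℝ) + 3) * Lsum d (n+1) 1 = 2 * Lsum d (n+1) 0 - 2 * Lsum d n 1 := by
  have expand : (2 * (n : ℝ) + 3) * Lsum d (n+1) 1
      = (∑ i ∈ Finset.range (n+2), (2 * (i : ℝ) + 1) * aT d (n+1) 1 i)
      + ∑ i ∈ Finset.range (n+2), (2 * (n : ℝ) + 2 - 2 * (i : ℝ)) * aT d (n+1) 1 i := by
    rw [Lsum, Finset.mul_sum, ← Finset.sum_add_distrib]
    exact Finset.sum_congr rfl fun i _ => by ring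
  rw [expand]
  have e1 : (∑ i ∈ Finset.range (n+2), (2 * (i : ℝ) + 1) * aT d (n+1) 1 i)
      = 2 * Lsum d (n+1) 0 := by
    rw [Lsum, Finset.mul_sum]
    exact Finset.sum_congr rfl fun i _ => aT3 d (n+1) i
  have e2 : (∑ i ∈ Finset.range (n+2), (2 * (n : ℝ) + 2 - 2 * (i : ℝ)) * aT d (n+1) 1 i)
      = (-2) * Lsum d n 1 := by
    rw [Finset.sum_range_succ,
        show (2 * (n : ℝ) + 2 - 2 * ((n + 1 : ℕ) : ℝ)) = 0 from by push_cast; ring,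
        zero_mul, add_zero, Lsum, Finset.mul_sum]
    exact Finset.sum_congr rfl fun i hi => aTv d n 1 i (Nat.lt_succ_iff.mp (Finset.mem_range.mp hi))
  rw [e1, e2]; ring

lemma Rrec_even (d n : ℕ) :
    (2 * (n : ℝ) + 2) * Rprod d (n+1) 0 = 2 * Rprod (d+1) n 1 - 2 * Rprod d n 0 := by
  unfold Rprod
  rw [Finset.prod_range_succ,
      show ∏ i ∈ Finset.range n, (2 * ((d+1 : ℕ) : ℝ) + 1 - 2 * ((1 : ℕ) : ℝ) - 2 * (i : ℝ))
         = ∏ i ∈ Finset.range n, (2 * (d : ℝ) + 1 - 2 * ((0 : ℕ) : ℝ) - 2 * (i : ℝ)) from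
        Finset.prod_congr rfl fun i _ => by push_cast; ring,
      show 2*(n+1)+0 = (2*n+1)+1 from by ring, show 2*n+0 = 2*n from by ring,
      Nat.factorial_succ ((2*n)+1), Nat.factorial_succ (2*n), Nat.factorial_succ d]
  have h1 : ((2*n).factorial : ℝ) ≠ 0 := Nat.cast_ne_zero.mpr (Nat.factorial_ne_zero _)
  push_cast
  field_simp
  ring

lemma Rrec_odd (d n : ℕ) :
    (2 * (n : ℝ) + 3) * Rprod d (n+1) 1 = 2 * Rprod d (n+1) 0 - 2 * Rprod d n 1 := by
  unfold Rprod
  rw [Finset.prod_range_succ, Finset.prod_range_succ',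
      show ∏ i ∈ Finset.range n, (2 * (d : ℝ) + 1 - 2 * ((0 : ℕ) : ℝ) - 2 * ((i+1 : ℕ) : ℝ))
         = ∏ i ∈ Finset.range n, (2 * (d : ℝ) + 1 - 2 * ((1 : ℕ) : ℝ) - 2 * (i : ℝ)) from
        Finset.prod_congr rfl fun i _ => by push_cast; ring,
      show 2*(n+1)+1 = ((2*n+1)+1)+1 from by ring, show 2*(n+1)+0 = (2*n+1)+1 from by ring,
      Nat.factorial_succ ((2*n+1)+1), Nat.factorial_succ ((2*n)+1)]
  have h1 : ((2*n+1).factorial : ℝ) ≠ 0 := Nat.cast_ne_zero.mpr (Nat.factorial_ne_zero _)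
  push_cast
  field_simp
  ring

lemma main_lemma (n : ℕ) : ∀ d, Lsum d n 0 = Rprod d n 0 ∧ Lsum d n 1 = Rprod d n 1 := by
  induction n with
  | zero =>
    intro d
    constructor <;>
      simp [Lsum, aT, Rprod, Nat.factorial]
  | succ n ih =>
    intro d
    have hne : (2 * (n : ℝ) + 2) ≠ 0 := by positivity
    have hno : (2 * (n : ℝ) + 3) ≠ 0 := by positivity
    have h0 : Lsum d (n+1) 0 = Rprod d (n+1) 0 := by
      have hL := Lrec_even d n
      have hR := Rrec_even d n
      rw [(ih (d+1)).2, (ih d).1] at hL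
      exact mul_left_cancel₀ hne (hL.trans hR.symm)
    have h1 : Lsum d (n+1) 1 = Rprod d (n+1) 1 := by
      have hL := Lrec_odd d n
      have hR := Rrec_odd d n
      rw [h0, (ih d).2] at hL
      exact mul_left_cancel₀ hno (hL.trans hR.symm)
    exact ⟨h0, h1⟩


/-- Lemma 3:
`Σ_{i=0}^{⌊j/2⌋} (−1)ⁱ (k−i−1).factorial 2^{j−2i}/((j−2i).factorial i!)
  = (k−⌊j/2⌋−1).factorial/j! · 2^{⌈j/2⌉} · ∏_{i=0}^{⌊j/2⌋−1} (2k − 2⌈j/2⌉ − 1 − 2i)`. -/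
theorem stmt_7 (k j : ℕ) (hk : 1 ≤ k) (hj : j ≤ k) :
    ∑ i ∈ Finset.range (j / 2 + 1),
        (-1 : ℝ) ^ i * (k - i - 1).factorial * 2 ^ (j - 2 * i) / ((j - 2 * i).factorial * i.factorial) =
      ((k - j / 2 - 1).factorial : ℝ) / j.factorial * 2 ^ ((j + 1) / 2) *
        ∏ i ∈ Finset.range (j / 2),
          (2 * (k : ℝ) - 2 * ((j + 1) / 2 : ℕ) - 1 - 2 * i) := by
  obtain ⟨n, r, d, hr, hj2, hk'⟩ : ∃ n r d, r < 2 ∧ j = 2 * n + r ∧ k = d + n + 1 :=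
    ⟨j / 2, j % 2, k - j / 2 - 1, by omega, by omega, by omega⟩
  subst hj2; subst hk'
  have h2 : (2 * n + r) / 2 = n := by omega
  have h3 : (2 * n + r + 1) / 2 = n + r := by omega
  rw [h2, h3]
  calc ∑ i ∈ Finset.range (n + 1),
        (-1 : ℝ) ^ i * ((d + n + 1) - i - 1).factorial * 2 ^ ((2 * n + r) - 2 * i) /
          (((2 * n + r) - 2 * i).factorial * i.factorial)
      = Lsum d n r := by
        rw [Lsum, ← Finset.sum_range_reflect]
        refine Finset.sum_congr rfl fun i hi => ?_
        have hin : i ≤ n := by have := Finset.mem_range.mp hi; omega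
        rw [aT, show n + 1 - 1 - i = n - i from by omega,
            show d + n + 1 - (n - i) - 1 = d + i from by omega,
            show 2 * n + r - 2 * (n - i) = r + 2 * i from by omega]
    _ = Rprod d n r := by
        rcases (by omega : r = 0 ∨ r = 1) with h | h <;> subst h
        · exact (main_lemma n d).1
        · exact (main_lemma n d).2
    _ = ((d + n + 1 - n - 1).factorial : ℝ) / (2 * n + r).factorial * 2 ^ (n + r) *
          ∏ i ∈ Finset.range n, (2 * ((d + n + 1 : ℕ) : ℝ) - 2 * ((n + r : ℕ) : ℝ) - 1 - 2 * i) := by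
        rw [Rprod, show d + n + 1 - n - 1 = d from by omega]
        refine congrArg _ (Finset.prod_congr rfl fun i _ => ?_)
        push_cast; ring
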